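/- Let X be a sequential T1 regular space with a G_δ*-diagonal. Then the subspace K(X) \ F(X) of nonempty infinite compact subsets of X, with the topology inherited from the Vietoris topology on K(X), is a D_1-space if and only if X is discrete. -/

import Mathlib

open Set TopologicalSpace

universe u v

/-- The Fell topology on the collection of all subsets of `X`, generated by the subbase
consisting of the sets `U⁻ = {H | H ∩ U ≠ ∅}` for `U` open and
`(Kᶜ)⁺ = {H | H ⊆ Kᶜ}` for `K` compact. -/
def fellTopology (X : Type u) [TopologicalSpace X] : TopologicalSpace (Set X) :=
  TopologicalSpace.generateFrom
    ({S | ∃ U : Set X, IsOpen U ∧ S = {H : Set X | (H ∩ U).Nonempty}} ∪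
     {S | ∃ K : Set X, IsCompact K ∧ S = {H : Set X | H ⊆ Kᶜ}})

/-- The Vietoris topology on the collection of all subsets of `X`, generated by the subbase
consisting of the sets `U⁺ = {H | H ⊆ U}` and `U⁻ = {H | H ∩ U ≠ ∅}` for `U` open. -/
def vietorisTopology (X : Type u) [TopologicalSpace X] : TopologicalSpace (Set X) :=
  TopologicalSpace.generateFrom
    ({S | ∃ U : Set X, IsOpen U ∧ S = {H : Set X | H ⊆ U}} ∪
     {S | ∃ U : Set X, IsOpen U ∧ S = {H : Set X | (H ∩ U).Nonempty}})

/-- A collection `S` of subsets of `X`, viewed as a hyperspace with the Fell topology. -/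
def FellHyper (X : Type u) [TopologicalSpace X] (S : Set (Set X)) : Type u :=
  {A : Set X // A ∈ S}

/-- A collection `S` of subsets of `X`, viewed as a hyperspace with the Vietoris topology. -/
def VietorisHyper (X : Type u) [TopologicalSpace X] (S : Set (Set X)) : Type u :=
  {A : Set X // A ∈ S}

instance FellHyper.instTopologicalSpace (X : Type u) [TopologicalSpace X] (S : Set (Set X)) :
    TopologicalSpace (FellHyper X S) :=
  TopologicalSpace.induced (Subtype.val : {A : Set X // A ∈ S} → Set X) (fellTopology X)

instance VietorisHyper.instTopologicalSpace (X : Type u) [TopologicalSpace X] (S : Set (Set X)) :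
    TopologicalSpace (VietorisHyper X S) :=
  TopologicalSpace.induced (Subtype.val : {A : Set X // A ∈ S} → Set X) (vietorisTopology X)

/-- The underlying subset of `X` of a point of a Fell hyperspace. -/
def FellHyper.carrier {X : Type u} [TopologicalSpace X] {S : Set (Set X)}
    (A : FellHyper X S) : Set X :=
  Subtype.val A

/-- The underlying subset of `X` of a point of a Vietoris hyperspace. -/
def VietorisHyper.carrier {X : Type u} [TopologicalSpace X] {S : Set (Set X)}
    (A : VietorisHyper X S) : Set X :=
  Subtype.val A

/-- `CL(X)`: the nonempty closed subsets of `X`. -/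
def CL (X : Type u) [TopologicalSpace X] : Set (Set X) := {A | A.Nonempty ∧ IsClosed A}

/-- `𝒦(X)`: the nonempty compact subsets of `X`. -/
def Kcal (X : Type u) [TopologicalSpace X] : Set (Set X) := {A | A.Nonempty ∧ IsCompact A}

/-- `ℱ(X)`: the nonempty finite subsets of `X`. -/
def Fcal (X : Type u) : Set (Set X) := {A | A.Nonempty ∧ A.Finite}

/-- `ℱₙ(X)`: the nonempty subsets of `X` with at most `n` points. -/
def Fn (X : Type u) (n : ℕ) : Set (Set X) := {A | A.Nonempty ∧ A.encard ≤ n}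

/-- A space is a `D₁`-space if every nonempty closed subset has a countable
neighborhood base. -/
def IsD1Space (Y : Type v) [TopologicalSpace Y] : Prop :=
  ∀ F : Set Y, F.Nonempty → IsClosed F →
    ∃ B : ℕ → Set Y, (∀ n, IsOpen (B n) ∧ F ⊆ B n) ∧
      ∀ V : Set Y, IsOpen V → F ⊆ V → ∃ n, B n ⊆ V

/-- A space is a `D₀`-space if every nonempty compact subset has a countable
neighborhood base. -/
def IsD0Space (Y : Type v) [TopologicalSpace Y] : Prop :=
  ∀ F : Set Y, F.Nonempty → IsCompact F →
    ∃ B : ℕ → Set Y, (∀ n, IsOpen (B n) ∧ F ⊆ B n) ∧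
      ∀ V : Set Y, IsOpen V → F ⊆ V → ∃ n, B n ⊆ V

/-- A space has a `G_δ`-diagonal if the diagonal is a `G_δ`-set in `X × X`. -/
def HasGdeltaDiagonal (X : Type u) [TopologicalSpace X] : Prop :=
  ∃ U : ℕ → Set (X × X), (∀ n, IsOpen (U n)) ∧ (⋂ n, U n) = {p : X × X | p.1 = p.2}

/-- A space is perfect if every closed subset is a `G_δ`-set. -/
def IsPerfectSpace (Y : Type v) [TopologicalSpace Y] : Prop :=
  ∀ F : Set Y, IsClosed F → ∃ U : ℕ → Set Y, (∀ n, IsOpen (U n)) ∧ F = ⋂ n, U n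

/-- A space has the compact-`G_δ` property if every compact subset is a `G_δ`-set. -/
def CompactGDeltaProperty (Y : Type v) [TopologicalSpace Y] : Prop :=
  ∀ K : Set Y, IsCompact K → ∃ U : ℕ → Set Y, (∀ n, IsOpen (U n)) ∧ K = ⋂ n, U n

/-- `γ`-space. -/
def IsGammaSpace (Y : Type v) [TopologicalSpace Y] : Prop :=
  ∃ g : ℕ → Y → Set Y,
    (∀ n y, IsOpen (g n y) ∧ y ∈ g n y) ∧
    (∀ y, ∀ V : Set Y, IsOpen V → y ∈ V → ∃ n, g n y ⊆ V) ∧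
    (∀ n y, ∃ m, ∀ z ∈ g m y, g m z ⊆ g n y)

/-- A space has a `G_δ*`-diagonal if there is a sequence `𝒰 n` of open covers such that
`{x} = ⋂ n, closure (st(x, 𝒰 n))` for every `x`. -/
def HasGdeltaStarDiagonal (X : Type u) [TopologicalSpace X] : Prop :=
  ∃ 𝒰 : ℕ → Set (Set X),
    (∀ n, ∀ U ∈ 𝒰 n, IsOpen U) ∧ (∀ n, ⋃₀ 𝒰 n = univ) ∧
    ∀ x : X, (⋂ n, closure (⋃₀ {U ∈ 𝒰 n | x ∈ U})) = {x}


section Statement10Aux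

open Filter Topology

private lemma notD1Vietoris {X : Type u} [TopologicalSpace X] [T1Space X] [T2Space X]
    {p : X} {xs : ℕ → X} (hinj : Function.Injective xs) (hnep : ∀ j, xs j ≠ p)
    (htail : ∀ U : Set X, IsOpen U → p ∈ U → {j | xs j ∉ U}.Finite) :
    ¬ IsD1Space (VietorisHyper X (Kcal X \ Fcal X)) := by
  intro hD1
  set E : Set ℕ → Set X := fun J => insert p (xs '' J) with hE
  have ememiff : ∀ {J : Set ℕ} {a : X}, a ∈ E J ↔ a = p ∨ ∃ j ∈ J, xs j = a := by
    intro J a; simp [hE]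
  have etendsto : Tendsto xs cofinite (𝓝 p) := by
    rw [Filter.tendsto_def]
    intro s hs
    obtain ⟨U, hUs, hU, hpU⟩ := mem_nhds_iff.mp hs
    rw [Filter.mem_cofinite]
    exact (htail U hU hpU).subset fun j hj => fun hjU => hj (hUs hjU)
  have ecpt : ∀ J : Set ℕ, IsCompact (E J) := by
    intro J
    rcases J.finite_or_infinite with hJ | hJ
    · exact ((hJ.image xs).insert p).isCompact
    · have hnth : Set.range (Nat.nth (· ∈ J)) = J := Nat.range_nth_of_infinite hJ
      have h1 : Tendsto (xs ∘ Nat.nth (· ∈ J)) cofinite (𝓝 p) :=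
        etendsto.comp (Nat.nth_injective hJ).tendsto_cofinite
      have h2 := h1.isCompact_insert_range_of_cofinite
      rwa [Set.range_comp, hnth] at h2
  have ecl : ∀ J : Set ℕ, IsClosed (E J) := fun J => (ecpt J).isClosed
  have emono : ∀ {J K : Set ℕ}, J ⊆ K → E J ⊆ E K := fun h =>
    insert_subset_insert (Set.image_mono h)
  have einf : ∀ {J : Set ℕ}, J.Infinite → (E J).Infinite := fun hJ =>
    ((Set.infinite_image_iff hinj.injOn).mpr hJ).mono (subset_insert _ _)
  have emem : ∀ {J : Set ℕ}, J.Infinite → E J ∈ Kcal X \ Fcal X := fun hJ =>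
    ⟨⟨⟨p, mem_insert _ _⟩, ecpt _⟩, fun hf => (einf hJ) hf.2⟩
  set V : ℕ → Set X := fun j => (E {j}ᶜ)ᶜ with hV
  have Vopen : ∀ j, IsOpen (V j) := fun j => (ecl _).isOpen_compl
  have xmemV : ∀ j, xs j ∈ V j := by
    intro j hmem
    rcases ememiff.mp hmem with h | ⟨i, hi, hij⟩
    · exact hnep j h
    · exact hi (hinj hij)
  have keyV : ∀ {A : Set X} {j : ℕ}, A ⊆ E Set.univ → (A ∩ V j).Nonempty → xs j ∈ A := by
    rintro A j hAS ⟨a, haA, haV⟩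
    rcases ememiff.mp (hAS haA) with rfl | ⟨i, _, hia⟩
    · exact absurd (ememiff.mpr (Or.inl rfl)) haV
    · rcases eq_or_ne i j with rfl | hij
      · exact hia ▸ haA
      · exact absurd (ememiff.mpr (Or.inr ⟨i, hij, hia⟩)) haV
  -- removing a late point from a tail-set stays in a Vietoris open set
  have remove : ∀ (O : Set (Set X)), IsOpen[vietorisTopology X] O → ∀ k, E {j | k ≤ j} ∈ O →
      ∃ M, ∀ m, M ≤ m → E ({j | k ≤ j} \ {m}) ∈ O := by
    intro O hO
    have hO' : TopologicalSpace.GenerateOpen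
        ({S | ∃ U : Set X, IsOpen U ∧ S = {H : Set X | H ⊆ U}} ∪
         {S | ∃ U : Set X, IsOpen U ∧ S = {H : Set X | (H ∩ U).Nonempty}}) O := hO
    clear hO
    induction hO' with
    | basic s hs =>
      intro k hks
      rcases hs with ⟨U, hU, rfl⟩ | ⟨U, hU, rfl⟩
      · exact ⟨0, fun m _ => subset_trans (emono Set.diff_subset) hks⟩
      · obtain ⟨a, haE, haU⟩ := hks
        rcases ememiff.mp haE with rfl | ⟨j, hj, rfl⟩
        · obtain ⟨N, hN⟩ := (htail U hU haU).bddAbove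
          refine ⟨max (N + 1) k + 1, fun m hm => ⟨xs (max (N + 1) k), ?_, ?_⟩⟩
          · refine ememiff.mpr (Or.inr ⟨max (N + 1) k, ⟨(show k ≤ max (N + 1) k from le_max_right _ _), fun h => ?_⟩, rfl⟩)
            rw [Set.mem_singleton_iff] at h
            omega
          · by_contra hcon
            have := hN hcon
            omega
        · refine ⟨j + 1, fun m hm => ⟨xs j, ?_, haU⟩⟩
          refine ememiff.mpr (Or.inr ⟨j, ⟨hj, fun h => ?_⟩, rfl⟩)
          rw [Set.mem_singleton_iff] at h
          omega
    | univ => exact fun k _ => ⟨0, fun m _ => trivial⟩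
    | inter s t hs ht ihs iht =>
      intro k hk
      obtain ⟨Ms, hMs⟩ := ihs k hk.1
      obtain ⟨Mt, hMt⟩ := iht k hk.2
      exact ⟨max Ms Mt, fun m hm =>
        ⟨hMs m (le_trans (le_max_left _ _) hm), hMt m (le_trans (le_max_right _ _) hm)⟩⟩
    | sUnion S hS ih =>
      intro k hk
      obtain ⟨t, htS, hEt⟩ := hk
      obtain ⟨M, hM⟩ := ih t htS k hEt
      exact ⟨M, fun m hm => ⟨t, htS, hM m hm⟩⟩
  -- hyperspace open-set machinery
  have hyOpen : ∀ {t : Set (Set X)}, IsOpen[vietorisTopology X] t →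
      IsOpen {A : VietorisHyper X (Kcal X \ Fcal X) | A.val ∈ t} := by
    intro t ht
    exact ⟨t, ht, rfl⟩
  have hyOpen_iff : ∀ {N : Set (VietorisHyper X (Kcal X \ Fcal X))}, IsOpen N →
      ∃ t, IsOpen[vietorisTopology X] t ∧
        N = {A : VietorisHyper X (Kcal X \ Fcal X) | A.val ∈ t} := by
    intro N hN
    obtain ⟨t, ht, hpre⟩ := hN
    exact ⟨t, ht, hpre ▸ rfl⟩
  have vplus : ∀ {U : Set X}, IsOpen U →
      IsOpen {A : VietorisHyper X (Kcal X \ Fcal X) | A.val ⊆ U} := fun hU =>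
    hyOpen (isOpen_generateFrom_of_mem (Or.inl ⟨_, hU, rfl⟩))
  have vminus : ∀ {U : Set X}, IsOpen U →
      IsOpen {A : VietorisHyper X (Kcal X \ Fcal X) | (A.val ∩ U).Nonempty} := fun hU =>
    hyOpen (isOpen_generateFrom_of_mem (Or.inr ⟨_, hU, rfl⟩))
  -- the closed discrete family
  have hIciInf : ∀ k : ℕ, ({j | k ≤ j} : Set ℕ).Infinite := fun k => Set.Ici_infinite k
  set a : ℕ → VietorisHyper X (Kcal X \ Fcal X) :=
    fun k => ⟨E {j | k + 1 ≤ j}, emem (hIciInf (k + 1))⟩ with ha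
  set F : Set (VietorisHyper X (Kcal X \ Fcal X)) := Set.range a with hF
  have memaval : ∀ {k m : ℕ}, k + 1 ≤ m → xs m ∈ (a k).val := fun h =>
    ememiff.mpr (Or.inr ⟨_, h, rfl⟩)
  have notmemF : ∀ {k m : ℕ}, xs m ∈ (a k).val → k + 1 ≤ m := by
    intro k m h
    rcases ememiff.mp h with h' | ⟨j, hj, hje⟩
    · exact absurd h' (hnep m)
    · exact (hinj hje) ▸ hj
  have pmem : ∀ k, p ∈ (a k).val := fun k => mem_insert _ _
  have asub : ∀ k, (a k).val ⊆ E Set.univ := fun k => emono (subset_univ _)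
  have Fclosed : IsClosed F := by
    rw [← isOpen_compl_iff, isOpen_iff_forall_mem_open]
    intro B hB
    by_cases hpb : p ∈ B.val
    · by_cases hbS : B.val ⊆ E Set.univ
      · set P : Set ℕ := {j | xs j ∈ B.val} with hP
        have hbP : B.val = E P := by
          apply subset_antisymm
          · intro x hx
            rcases ememiff.mp (hbS hx) with rfl | ⟨i, _, hix⟩
            · exact mem_insert _ _
            · exact ememiff.mpr (Or.inr ⟨i, by rw [hP, mem_setOf_eq, hix]; exact hx, hix⟩)
          · intro x hx
            rcases ememiff.mp hx with rfl | ⟨i, hi, hix⟩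
            · exact hpb
            · exact hix ▸ hi
        by_cases hex : ∃ m ∈ P, ∃ m', m < m' ∧ m' ∉ P
        · obtain ⟨m, hmP, m', hmm', hm'P⟩ := hex
          refine ⟨{A : VietorisHyper X (Kcal X \ Fcal X) | A.val ⊆ {xs m'}ᶜ} ∩
            {A | (A.val ∩ V m).Nonempty}, ?_, ?_, ?_⟩
          · rintro A ⟨hA1, hA2⟩ ⟨k, rfl⟩
            have h1 : k + 1 ≤ m := notmemF (keyV (asub k) hA2)
            have h2 : ¬ (k + 1 ≤ m') := fun h => hA1 (memaval h) rfl
            omega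
          · exact (vplus isOpen_compl_singleton).inter (vminus (Vopen m))
          · refine Set.mem_inter ?_ ⟨xs m, hmP, xmemV m⟩
            intro x hx hxm'
            rw [Set.mem_singleton_iff] at hxm'
            exact hm'P (show xs m' ∈ B.val from hxm' ▸ hx)
        · push_neg at hex
          have hPne : P.Nonempty := by
            rcases P.eq_empty_or_nonempty with h | h
            · exfalso
              have hBE : B.val = E ∅ := by rw [hbP, h]
              have hEe : E ∅ = {p} := by simp [hE]
              exact B.2.2 ⟨B.2.1.1, by rw [hBE, hEe]; exact Set.finite_singleton p⟩
            · exact h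
          obtain ⟨m₀, hm₀, hmin⟩ := Nat.lt_wfRel.wf.has_min P hPne
          have hPIci : P = {j | m₀ ≤ j} := by
            apply subset_antisymm
            · intro j hj
              exact not_lt.mp (fun h => hmin j hj h)
            · intro j hj
              rcases eq_or_lt_of_le (show m₀ ≤ j from hj) with rfl | h
              · exact hm₀
              · exact hex m₀ hm₀ j h
          rcases Nat.eq_zero_or_pos m₀ with rfl | hm₀pos
          · refine ⟨{A : VietorisHyper X (Kcal X \ Fcal X) | (A.val ∩ V 0).Nonempty},
              ?_, vminus (Vopen 0), ?_⟩
            · rintro A hA ⟨k, rfl⟩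
              have := notmemF (keyV (asub k) hA)
              omega
            · exact ⟨xs 0, hm₀, xmemV 0⟩
          · exfalso
            apply hB
            refine ⟨m₀ - 1, ?_⟩
            apply Subtype.ext
            have h1 : m₀ - 1 + 1 = m₀ := by omega
            show E {j | m₀ - 1 + 1 ≤ j} = B.val
            rw [h1, hbP, hPIci]
      · refine ⟨{A : VietorisHyper X (Kcal X \ Fcal X) | (A.val ∩ (E Set.univ)ᶜ).Nonempty},
          ?_, vminus (ecl Set.univ).isOpen_compl, ?_⟩
        · rintro A ⟨x, hxA, hxc⟩ ⟨k, rfl⟩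
          exact hxc (asub k hxA)
        · obtain ⟨x, hxB, hxS⟩ := not_subset.mp hbS
          exact ⟨x, hxB, hxS⟩
    · refine ⟨{A : VietorisHyper X (Kcal X \ Fcal X) | A.val ⊆ {p}ᶜ},
        ?_, vplus isOpen_compl_singleton, ?_⟩
      · rintro A hA ⟨k, rfl⟩
        exact hA (pmem k) rfl
      · intro x hx hxp
        rw [Set.mem_singleton_iff] at hxp
        exact hpb (hxp ▸ hx)
  obtain ⟨Bn, hBn, hbase⟩ := hD1 F ⟨a 0, Set.mem_range_self 0⟩ Fclosed
  have hdiffinf : ∀ n m : ℕ, ({j | n + 1 ≤ j} \ {m} : Set ℕ).Infinite :=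
    fun n m => (hIciInf (n + 1)).diff (Set.finite_singleton m)
  have step : ∀ n : ℕ, ∃ m, n + 2 ≤ m ∧
      (⟨E ({j | n + 1 ≤ j} \ {m}), emem (hdiffinf n m)⟩ :
        VietorisHyper X (Kcal X \ Fcal X)) ∈ Bn n := by
    intro n
    obtain ⟨O, hO, hNO⟩ := hyOpen_iff (hBn n).1
    have haO : E {j | n + 1 ≤ j} ∈ O := by
      have h := (hBn n).2 (Set.mem_range_self n)
      rw [hNO] at h
      exact h
    obtain ⟨M, hM⟩ := remove O hO (n + 1) haO
    refine ⟨max M (n + 2), le_max_right _ _, ?_⟩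
    rw [hNO]
    exact hM _ (le_max_left _ _)
  choose m hm1 hm2 using step
  set W : Set (VietorisHyper X (Kcal X \ Fcal X)) := ⋃ k,
    ({A : VietorisHyper X (Kcal X \ Fcal X) | (A.val ∩ V (k + 1)).Nonempty} ∩
     {A | (A.val ∩ V (m k)).Nonempty} ∩
     {A | A.val ⊆ (xs '' {j | j < k + 1})ᶜ}) with hW
  have hWopen : IsOpen W := by
    apply isOpen_iUnion
    intro k
    exact ((vminus (Vopen (k + 1))).inter (vminus (Vopen (m k)))).inter
      (vplus ((Set.Finite.image xs (Set.finite_Iio (k + 1))).isClosed.isOpen_compl))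
  have hFW : F ⊆ W := by
    rintro A ⟨k, rfl⟩
    apply Set.mem_iUnion.mpr
    refine ⟨k, ⟨⟨xs (k + 1), memaval le_rfl, xmemV _⟩,
      ⟨xs (m k), memaval (by have := hm1 k; omega), xmemV _⟩⟩, ?_⟩
    intro x hx hximg
    obtain ⟨j, hj, hje⟩ := hximg
    rcases ememiff.mp hx with rfl | ⟨i, hi, hie⟩
    · exact hnep j hje
    · have : j = i := hinj (hje.trans hie.symm)
      rw [mem_setOf_eq] at hj hi
      omega
  have hCW : ∀ n, (⟨E ({j | n + 1 ≤ j} \ {m n}), emem (hdiffinf n (m n))⟩ :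
      VietorisHyper X (Kcal X \ Fcal X)) ∉ W := by
    intro n hmem
    obtain ⟨k, hk⟩ := Set.mem_iUnion.mp hmem
    obtain ⟨⟨h1, h2⟩, h3⟩ := hk
    have hc1 : xs (k + 1) ∈ E ({j | n + 1 ≤ j} \ {m n}) := keyV (emono (subset_univ _)) h1
    have hc2 : xs (m k) ∈ E ({j | n + 1 ≤ j} \ {m n}) := keyV (emono (subset_univ _)) h2
    have hk1 : k + 1 ∈ ({j | n + 1 ≤ j} \ {m n} : Set ℕ) := by
      rcases ememiff.mp hc1 with h | ⟨j, hj, hje⟩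
      · exact absurd h (hnep _)
      · exact (hinj hje) ▸ hj
    have hk2 : m k ∈ ({j | n + 1 ≤ j} \ {m n} : Set ℕ) := by
      rcases ememiff.mp hc2 with h | ⟨j, hj, hje⟩
      · exact absurd h (hnep _)
      · exact (hinj hje) ▸ hj
    have hkn : n ≤ k := by
      have := hk1.1
      rw [mem_setOf_eq] at this
      omega
    have hkne : k ≠ n := by
      intro h
      exact hk2.2 (by rw [Set.mem_singleton_iff, h])
    have hxmem : xs (n + 1) ∈ E ({j | n + 1 ≤ j} \ {m n}) := by
      refine ememiff.mpr (Or.inr ⟨n + 1, ⟨show n + 1 ≤ n + 1 from le_rfl, fun h => ?_⟩, rfl⟩)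
      rw [Set.mem_singleton_iff] at h
      have := hm1 n
      omega
    exact h3 hxmem ⟨n + 1, by rw [mem_setOf_eq]; omega, rfl⟩
  obtain ⟨n₀, hn₀⟩ := hbase W hWopen hFW
  exact hCW n₀ (hn₀ (hm2 n₀))

end Statement10Aux

/-- for a sequential space with a `G_δ*`-diagonal, `𝒦(X) \ ℱ(X)` with the
Vietoris topology is a `D₁`-space iff `X` is discrete. -/
theorem statement10 (X : Type u) [TopologicalSpace X] [T1Space X] [RegularSpace X]
    [SequentialSpace X] (hG : HasGdeltaStarDiagonal X) :
    IsD1Space (VietorisHyper X (Kcal X \ Fcal X)) ↔ DiscreteTopology X := by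
  constructor
  · intro hD1
    by_contra hnd
    have hcl : ∃ s : Set X, ¬ IsClosed s := by
      by_contra h
      push_neg at h
      exact hnd (discreteTopology_iff_forall_isClosed.mpr h)
    obtain ⟨s, hs⟩ := hcl
    have hnsq : ¬ IsSeqClosed s := fun h => hs h.isClosed
    have hns : ¬ ∀ (u : ℕ → X) (q : X), (∀ n, u n ∈ s) →
        Filter.Tendsto u Filter.atTop (nhds q) → q ∈ s := by
      intro h
      exact hnsq fun u q hu ht => h u q hu ht
    push_neg at hns
    obtain ⟨u, q, hus, hut, hqs⟩ := hns
    have huq : ∀ n, u n ≠ q := fun n h => hqs (h ▸ hus n)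
    have hrng : (Set.range u).Infinite := by
      intro hfin
      haveI := hfin.to_subtype
      set f : ℕ → Set.range u := fun n => ⟨u n, Set.mem_range_self n⟩ with hf
      obtain ⟨y, hy⟩ := Finite.exists_infinite_fiber f
      have hT : (f ⁻¹' {y} : Set ℕ).Infinite := Set.infinite_coe_iff.mp hy
      have hqy : q = y.val := by
        have hmc : q ∈ closure {y.val} := by
          rw [mem_closure_iff]
          intro U hU hqU
          obtain ⟨N, hN⟩ := Filter.eventually_atTop.mp (hut (hU.mem_nhds hqU))
          obtain ⟨n, hnT, hNn⟩ : ∃ n ∈ f ⁻¹' {y}, N ≤ n := by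
            by_contra hcon
            push_neg at hcon
            exact hT ((Set.finite_Iio N).subset fun j hj => (hcon j hj))
          have hval : u n = y.val := congrArg Subtype.val hnT
          exact ⟨u n, hN n hNn, hval⟩
        rwa [closure_singleton, Set.mem_singleton_iff] at hmc
      obtain ⟨n₁, hn₁⟩ := y.2
      exact huq n₁ (hn₁.trans hqy.symm)
    set e := hrng.natEmbedding with he
    set xs : ℕ → X := fun j => (e j : X) with hxs
    have hinj : Function.Injective xs := fun i j h => e.injective (Subtype.ext h)
    have hnep : ∀ j, xs j ≠ q := by
      intro j h
      obtain ⟨n, hn⟩ := (e j).2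
      exact huq n (hn.trans h)
    have htail : ∀ U : Set X, IsOpen U → q ∈ U → {j | xs j ∉ U}.Finite := by
      intro U hU hqU
      obtain ⟨N, hN⟩ := Filter.eventually_atTop.mp (hut (hU.mem_nhds hqU))
      have hbadfin : (u '' {n | n < N}).Finite := (Set.finite_Iio N).image u
      have hsub : {j | xs j ∉ U} ⊆ xs ⁻¹' (u '' {n | n < N}) := by
        intro j hj
        obtain ⟨n, hn⟩ := (e j).2
        have hnN : n < N := by
          by_contra h'
          push_neg at h'
          have hUn : u n ∈ U := hN n h'
          rw [hn] at hUn
          exact hj hUn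
        exact ⟨n, hnN, hn⟩
      exact (hbadfin.preimage hinj.injOn).subset hsub
    exact notD1Vietoris hinj hnep htail hD1
  · intro hdisc F hFne hFcl
    exfalso
    obtain ⟨A, _⟩ := hFne
    obtain ⟨⟨hne, hcpt⟩, hnfin⟩ := A.2
    exact hnfin ⟨hne, hcpt.finite ⟨inferInstance⟩⟩
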